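/- Let L = Log(𝓕_L) be a tabular quasi-normal modal logic, where 𝓕_L = {(F_1,0),…,(F_n,0)} is a reduced finite set of finite rooted frames (reduced means Log({(F_i,0)}) ⊄ Log({(F_j,0)}) and Log({(F_i,0)}) ⊉ Log({(F_j,0)}) whenever i ≠ j, i.e. Log({(F_i,0)}) ⊈ Log({(F_j,0)}) for i ≠ j). Then the following are equivalent: (1) L has the Craig interpolation property; (2) for every signature σ: whenever M,0 ∼_σ N,0 for a model M based on F_i and a model N based on F_j, the σ-reducts of (M,0) and (N,0) are isomorphic (in particular i = j). -/

import Mathlib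

inductive MForm (α : Type) : Type
  | top : MForm α
  | atom : α → MForm α
  | neg : MForm α → MForm α
  | and : MForm α → MForm α → MForm α
  | box : MForm α → MForm α
deriving DecidableEq

namespace MForm

def imp {α : Type} (φ ψ : MForm α) : MForm α := neg (and φ (neg ψ))

def dia {α : Type} (φ : MForm α) : MForm α := neg (box (neg φ))

def sig {α : Type} [DecidableEq α] : MForm α → Finset α
  | top => ∅
  | atom p => {p}
  | neg φ => sig φ
  | and φ ψ => sig φ ∪ sig ψ
  | box φ => sig φ

def IsProp {α : Type} : MForm α → Prop
  | top => True
  | atom _ => True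
  | neg φ => IsProp φ
  | and φ ψ => IsProp φ ∧ IsProp ψ
  | box _ => False

def subf {α : Type} [DecidableEq α] : MForm α → Finset (MForm α)
  | top => {top}
  | atom p => {atom p}
  | neg φ => insert (neg φ) (subf φ)
  | and φ ψ => insert (and φ ψ) (subf φ ∪ subf ψ)
  | box φ => insert (box φ) (subf φ)

/-- The dag-size of a formula: the number of its distinct subformulas. -/
def dagSize {α : Type} [DecidableEq α] (φ : MForm α) : ℕ := (subf φ).card

end MForm

def psat {α : Type} (v : α → Prop) : MForm α → Prop
  | .top => True
  | .atom p => v p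
  | .neg φ => ¬ psat v φ
  | .and φ ψ => psat v φ ∧ psat v ψ
  | .box _ => True

/-- Propositional tautology. -/
def PTaut {α : Type} (φ : MForm α) : Prop := ∀ v : α → Prop, psat v φ

def bigAnd {α : Type} : List (MForm α) → MForm α
  | [] => .top
  | φ :: l => .and φ (bigAnd l)

def bigOr {α : Type} (l : List (MForm α)) : MForm α := .neg (bigAnd (l.map .neg))

def boxIter {α : Type} : ℕ → MForm α → MForm α
  | 0, φ => φ
  | n + 1, φ => .box (boxIter n φ)

def diaIter {α : Type} : ℕ → MForm α → MForm α
  | 0, φ => φ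
  | n + 1, φ => MForm.dia (diaIter n φ)

/-- `□^{≤n} φ`. -/
def ble {α : Type} (n : ℕ) (φ : MForm α) : MForm α :=
  bigAnd ((List.range (n + 1)).map (fun k => boxIter k φ))

/-- `◇^{≤n} φ`. -/
def dle {α : Type} (n : ℕ) (φ : MForm α) : MForm α := .neg (ble n (.neg φ))

def substAtoms {α β : Type} (s : α → MForm β) : MForm α → MForm β
  | .top => .top
  | .atom a => s a
  | .neg φ => .neg (substAtoms s φ)
  | .and φ ψ => .and (substAtoms s φ) (substAtoms s ψ)
  | .box φ => .box (substAtoms s φ)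


/-- A finite rooted (pointed) frame. -/
structure FFrame where
  W : Type
  fin : Fintype W
  deq : DecidableEq W
  R : W → W → Prop
  root : W
  rooted : ∀ w, Relation.ReflTransGen R root w

attribute [instance] FFrame.fin FFrame.deq

def sat (F : FFrame) (V : F.W → ℕ → Prop) : F.W → MForm ℕ → Prop
  | _, .top => True
  | w, .atom p => V w p
  | w, .neg φ => ¬ sat F V w φ
  | w, .and φ ψ => sat F V w φ ∧ sat F V w ψ
  | w, .box φ => ∀ v, F.R w v → sat F V v φ

/-- The logic determined by a (finite) family of finite rooted frames. -/
def Log {ι : Type} (Fr : ι → FFrame) : Set (MForm ℕ) :=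
  {φ | ∀ i, ∀ V : (Fr i).W → ℕ → Prop, sat (Fr i) V (Fr i).root φ}

def StrImp (L : Set (MForm ℕ)) (σ : Finset ℕ) (φ χ : MForm ℕ) : Prop :=
  χ.sig ⊆ σ ∧ φ.imp χ ∈ L ∧
    ∀ ψ : MForm ℕ, ψ.sig ⊆ σ → φ.imp ψ ∈ L → χ.imp ψ ∈ L

def CraigInt (L : Set (MForm ℕ)) (φ ψ χ : MForm ℕ) : Prop :=
  φ.imp χ ∈ L ∧ χ.imp ψ ∈ L ∧ χ.sig ⊆ φ.sig ∩ ψ.sig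

def HasCIP (L : Set (MForm ℕ)) : Prop :=
  ∀ φ ψ : MForm ℕ, φ.imp ψ ∈ L → ∃ χ, CraigInt L φ ψ χ

def IsBisim (σ : Finset ℕ) (F₁ : FFrame) (V₁ : F₁.W → ℕ → Prop)
    (F₂ : FFrame) (V₂ : F₂.W → ℕ → Prop) (Z : F₁.W → F₂.W → Prop) : Prop :=
  (∀ w₁ w₂, Z w₁ w₂ → ∀ p ∈ σ, (V₁ w₁ p ↔ V₂ w₂ p)) ∧
  (∀ w₁ w₂ v₁, Z w₁ w₂ → F₁.R w₁ v₁ → ∃ v₂, F₂.R w₂ v₂ ∧ Z v₁ v₂) ∧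
  (∀ w₁ w₂ v₂, Z w₁ w₂ → F₂.R w₂ v₂ → ∃ v₁, F₁.R w₁ v₁ ∧ Z v₁ v₂)

def Bisim (σ : Finset ℕ) (F₁ : FFrame) (V₁ : F₁.W → ℕ → Prop) (w₁ : F₁.W)
    (F₂ : FFrame) (V₂ : F₂.W → ℕ → Prop) (w₂ : F₂.W) : Prop :=
  ∃ Z, IsBisim σ F₁ V₁ F₂ V₂ Z ∧ Z w₁ w₂

def IsEME (σ : Finset ℕ) (Φ : Finset (MForm ℕ)) : Prop :=
  (∀ φ ∈ Φ, φ.IsProp ∧ φ.sig ⊆ σ) ∧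
  (∀ v : ℕ → Prop, ∃ φ ∈ Φ, psat v φ) ∧
  (∀ φ ∈ Φ, ∀ ψ ∈ Φ, φ ≠ ψ → ∀ v : ℕ → Prop, ¬ (psat v φ ∧ psat v ψ))

def IsCover (σ : Finset ℕ) (Φ : Finset (MForm ℕ)) (F : FFrame) (V : F.W → ℕ → Prop) : Prop :=
  ∀ φ ∈ Φ, ∀ w₁ w₂, sat F V w₁ φ → sat F V w₂ φ →
    ∀ χ : MForm ℕ, χ.IsProp → χ.sig ⊆ σ → (sat F V w₁ χ ↔ sat F V w₂ χ)

noncomputable def coverFml (σ : Finset ℕ) (Φ : Finset (MForm ℕ)) (N : ℕ) : MForm ℕ :=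
  bigAnd (Φ.toList.map (fun φ => bigAnd (σ.toList.map (fun p =>
    MForm.imp (dle N (.and φ (.atom p))) (ble N (MForm.imp φ (.atom p)))))))

/-- Satisfaction of `ML(Φ)`-formulas on abstract Φ-models `(F,f)`. -/
def asat (F : FFrame) (f : F.W → MForm ℕ) : F.W → MForm (MForm ℕ) → Prop
  | _, .top => True
  | w, .atom φ => f w = φ
  | w, .neg δ => ¬ asat F f w δ
  | w, .and δ₁ δ₂ => asat F f w δ₁ ∧ asat F f w δ₂
  | w, .box δ => ∀ v, F.R w v → asat F f v δ

def AbsBisim (F₁ : FFrame) (f₁ : F₁.W → MForm ℕ)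
    (F₂ : FFrame) (f₂ : F₂.W → MForm ℕ) (Z : F₁.W → F₂.W → Prop) : Prop :=
  (∀ w₁ w₂, Z w₁ w₂ → f₁ w₁ = f₂ w₂) ∧
  (∀ w₁ w₂ v₁, Z w₁ w₂ → F₁.R w₁ v₁ → ∃ v₂, F₂.R w₂ v₂ ∧ Z v₁ v₂) ∧
  (∀ w₁ w₂ v₂, Z w₁ w₂ → F₂.R w₂ v₂ → ∃ v₁, F₁.R w₁ v₁ ∧ Z v₁ v₂)

/-- Abstract Φ-bisimilarity of the roots of two abstract Φ-models. -/
def ABisimRoot (F₁ : FFrame) (f₁ : F₁.W → MForm ℕ) (F₂ : FFrame) (f₂ : F₂.W → MForm ℕ) : Prop :=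
  ∃ Z, AbsBisim F₁ f₁ F₂ f₂ Z ∧ Z F₁.root F₂.root

/-- Viewing a formula of `ML(Φ)` as a modal formula (atoms of `Φ` are formulas). -/
def flatten : MForm (MForm ℕ) → MForm ℕ
  | .top => .top
  | .atom φ => φ
  | .neg δ => .neg (flatten δ)
  | .and δ₁ δ₂ => .and (flatten δ₁) (flatten δ₂)
  | .box δ => .box (flatten δ)

/-- `δ ∈ ML(Φ)` is an abstract class identifier (for the Φ-bisimulation class of some
abstract Φ-model for `L = Log Fr`). -/
def IsClassId {ι : Type} (Fr : ι → FFrame) (Φ : Finset (MForm ℕ)) (δ : MForm (MForm ℕ)) : Prop :=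
  ∃ i, ∃ f : (Fr i).W → MForm ℕ, (∀ w, f w ∈ Φ) ∧
    ∀ j, ∀ f' : (Fr j).W → MForm ℕ, (∀ w, f' w ∈ Φ) →
      (asat (Fr j) f' (Fr j).root δ ↔ ABisimRoot (Fr j) f' (Fr i) f)

/-- A σ-encoding for `L = Log Fr`: a set `Γ` of σ-EMEs together with, for each `Φ ∈ Γ`,
a set `Δ Φ` of abstract class identifiers, such that every model based on a frame of the
family has a σ-cover `Φ ∈ Γ` and satisfies some `δ ∈ Δ Φ` at its root. -/
def IsEncoding {ι : Type} (Fr : ι → FFrame) (σ : Finset ℕ)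
    (Γ : Finset (Finset (MForm ℕ))) (Δ : Finset (MForm ℕ) → Finset (MForm (MForm ℕ))) : Prop :=
  (∀ Φ ∈ Γ, IsEME σ Φ) ∧
  (∀ Φ ∈ Γ, ∀ δ ∈ Δ Φ, MForm.sig δ ⊆ Φ ∧ IsClassId Fr Φ δ) ∧
  (∀ i, ∀ V : (Fr i).W → ℕ → Prop, ∃ Φ ∈ Γ, IsCover σ Φ (Fr i) V ∧
    ∃ δ ∈ Δ Φ, sat (Fr i) V (Fr i).root (flatten δ))

/-- `ξ^f`: replace each atom `p_w` by `◇^{≤N}(f(w) ∧ p)`. -/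
def xiSub (N : ℕ) (F : FFrame) (f : F.W → MForm ℕ) (ξ : MForm (ℕ × F.W)) : MForm ℕ :=
  substAtoms (fun pw => dle N (.and (f pw.2) (.atom pw.1))) ξ

/-- The abstract Φ-models on the frame `F` in the class identified by `δ`. -/
noncomputable def fList (F : FFrame) (Φ : Finset (MForm ℕ)) (δ : MForm (MForm ℕ)) :
    List (F.W → MForm ℕ) :=
  (((@Finset.filter (F.W → {x // x ∈ Φ})
      (fun f => asat F (fun w => (f w).1) F.root δ) (Classical.decPred _)
      Finset.univ)).toList).map (fun f w => (f w).1)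

/-- The backward translation `rt_{F,L}`. -/
noncomputable def rt (σ : Finset ℕ) (N : ℕ)
    (Γ : Finset (Finset (MForm ℕ))) (Δ : Finset (MForm ℕ) → Finset (MForm (MForm ℕ)))
    (F : FFrame) (ξ : MForm (ℕ × F.W)) : MForm ℕ :=
  bigAnd (Γ.toList.map (fun Φ =>
    bigAnd ((Δ Φ).toList.map (fun δ =>
      MForm.imp (.and (coverFml σ Φ N) (flatten δ))
        (bigOr ((fList F Φ δ).map (fun f => xiSub N F f ξ)))))))

/-- The forward translation `tr_{F,w}`. -/
noncomputable def tr (F : FFrame) : MForm ℕ → F.W → MForm (ℕ × F.W)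
  | .top, _ => .top
  | .atom p, w => .atom (p, w)
  | .neg φ, w => .neg (tr F φ w)
  | .and φ ψ, w => .and (tr F φ w) (tr F ψ w)
  | .box φ, w =>
      bigAnd (((@Finset.filter _ (F.R w) (Classical.decPred _) Finset.univ).toList).map
        (fun w' => tr F φ w'))

/-- The propositional valuation `v_M` over the atoms `σ_F = σ × W` induced by a model. -/
def vM (F : FFrame) (V : F.W → ℕ → Prop) : ℕ × F.W → Prop := fun pw => V pw.2 pw.1

/-- Uniform propositional `σ'`-interpolant. -/
def UPropInt {β : Type} [DecidableEq β] (σ' : Finset β) (χ ξ : MForm β) : Prop :=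
  ξ.IsProp ∧ ξ.sig ⊆ σ' ∧ PTaut (χ.imp ξ) ∧
    ∀ ψ : MForm β, ψ.IsProp → ψ.sig ∩ χ.sig ⊆ σ' → PTaut (χ.imp ψ) → PTaut (ξ.imp ψ)

/-- Propositional Craig interpolant for a tautological implication. -/
def PCraig {β : Type} [DecidableEq β] (χ₁ χ₂ ξ : MForm β) : Prop :=
  ξ.IsProp ∧ ξ.sig ⊆ χ₁.sig ∩ χ₂.sig ∧ PTaut (χ₁.imp ξ) ∧ PTaut (ξ.imp χ₂)

/-- The logic of a single finite rooted frame. -/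
def Log1 (F : FFrame) : Set (MForm ℕ) :=
  {φ | ∀ V : F.W → ℕ → Prop, sat F V F.root φ}

section Aux
open MForm

lemma sat_bigAnd (F : FFrame) (V : F.W → ℕ → Prop) (w : F.W) (l : List (MForm ℕ)) :
    sat F V w (bigAnd l) ↔ ∀ θ ∈ l, sat F V w θ := by
  induction l with
  | nil => simp [bigAnd, sat]
  | cons a l ih => simp [bigAnd, sat, ih]

lemma sat_bigOr (F : FFrame) (V : F.W → ℕ → Prop) (w : F.W) (l : List (MForm ℕ)) :
    sat F V w (bigOr l) ↔ ∃ θ ∈ l, sat F V w θ := by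
  classical
  simp only [bigOr, sat, sat_bigAnd]
  constructor
  · intro h
    by_contra hc
    push_neg at hc
    exact h (by
      intro θ hθ
      simp only [List.mem_map] at hθ
      obtain ⟨a, ha, rfl⟩ := hθ
      exact fun hs => hc a ha hs)
  · rintro ⟨θ, hθ, hs⟩ h
    exact h (.neg θ) (List.mem_map_of_mem hθ) hs

lemma sat_imp (F : FFrame) (V : F.W → ℕ → Prop) (w : F.W) (φ ψ : MForm ℕ) :
    sat F V w (φ.imp ψ) ↔ (sat F V w φ → sat F V w ψ) := by
  simp only [MForm.imp, sat]; tauto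

lemma sat_dia (F : FFrame) (V : F.W → ℕ → Prop) (w : F.W) (φ : MForm ℕ) :
    sat F V w (MForm.dia φ) ↔ ∃ v, F.R w v ∧ sat F V v φ := by
  simp only [MForm.dia, sat]; push_neg; tauto

lemma sig_bigAnd_subset {l : List (MForm ℕ)} {S : Finset ℕ}
    (h : ∀ θ ∈ l, MForm.sig θ ⊆ S) : (bigAnd l).sig ⊆ S := by
  induction l with
  | nil => simp [bigAnd, MForm.sig]
  | cons a l ih =>
      simp only [bigAnd, MForm.sig, Finset.union_subset_iff]
      exact ⟨h a (by simp), ih fun θ hθ => h θ (by simp [hθ])⟩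

lemma sig_bigOr_subset {l : List (MForm ℕ)} {S : Finset ℕ}
    (h : ∀ θ ∈ l, MForm.sig θ ⊆ S) : (bigOr l).sig ⊆ S := by
  simp only [bigOr, MForm.sig]
  apply sig_bigAnd_subset
  intro θ hθ
  simp only [List.mem_map] at hθ
  obtain ⟨a, ha, rfl⟩ := hθ
  exact h a ha

lemma sat_agree (F : FFrame) (V V' : F.W → ℕ → Prop) (θ : MForm ℕ)
    (h : ∀ w, ∀ p ∈ θ.sig, (V w p ↔ V' w p)) :
    ∀ w, sat F V w θ ↔ sat F V' w θ := by
  induction θ with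
  | top => intro w; simp [sat]
  | atom p => intro w; simpa [sat, MForm.sig] using h w p
  | neg φ ih => intro w; simp only [sat]; rw [ih (fun w p hp => h w p hp) w]
  | and φ ψ ih1 ih2 =>
      intro w
      simp only [sat]
      rw [ih1 (fun w p hp => h w p (by simp [MForm.sig, hp])) w,
          ih2 (fun w p hp => h w p (by simp [MForm.sig, hp])) w]
  | box φ ih =>
      intro w
      simp only [sat]
      constructor <;> intro hh v hv
      · exact (ih (fun w p hp => h w p hp) v).1 (hh v hv)
      · exact (ih (fun w p hp => h w p hp) v).2 (hh v hv)

lemma sat_iso (F G : FFrame) (g : F.W ≃ G.W)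
    (hR : ∀ a b, F.R a b ↔ G.R (g a) (g b))
    (V : F.W → ℕ → Prop) (U : G.W → ℕ → Prop) (θ : MForm ℕ)
    (hV : ∀ w, ∀ p ∈ θ.sig, (V w p ↔ U (g w) p)) :
    ∀ w, sat F V w θ ↔ sat G U (g w) θ := by
  induction θ with
  | top => intro w; simp [sat]
  | atom p => intro w; simpa [sat, MForm.sig] using hV w p
  | neg φ ih => intro w; simp only [sat]; rw [ih (fun w p hp => hV w p hp) w]
  | and φ ψ ih1 ih2 =>
      intro w
      simp only [sat]
      rw [ih1 (fun w p hp => hV w p (by simp [MForm.sig, hp])) w,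
          ih2 (fun w p hp => hV w p (by simp [MForm.sig, hp])) w]
  | box φ ih =>
      intro w
      simp only [sat]
      constructor
      · intro hh u hu
        have := (ih (fun w p hp => hV w p hp) (g.symm u)).1
          (hh (g.symm u) (by rw [hR]; simpa using hu))
        simpa using this
      · intro hh v hv
        exact (ih (fun w p hp => hV w p hp) v).2 (hh (g v) ((hR w v).1 hv))

end Aux
section Aux2
open MForm

def stepR (F : FFrame) : ℕ → F.W → F.W → Prop
  | 0, w, u => w = u
  | n+1, w, u => ∃ v, F.R w v ∧ stepR F n v u

lemma stepR_snoc (F : FFrame) : ∀ (n : ℕ) (w u v : F.W),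
    stepR F n w u → F.R u v → stepR F (n+1) w v := by
  intro n
  induction n with
  | zero => intro w u v h hr; cases h; exact ⟨v, hr, rfl⟩
  | succ k ih =>
      rintro w u v ⟨x, hx, hs⟩ hr
      exact ⟨x, hx, ih x u v hs hr⟩

lemma stepR_snoc_iff (F : FFrame) : ∀ (n : ℕ) (w v : F.W),
    stepR F (n+1) w v ↔ ∃ u, stepR F n w u ∧ F.R u v := by
  intro n
  induction n with
  | zero =>
      intro w v
      constructor
      · rintro ⟨x, hx, hs⟩; cases hs; exact ⟨w, rfl, hx⟩
      · rintro ⟨u, hu, hr⟩; cases hu; exact ⟨v, hr, rfl⟩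
  | succ k ih =>
      intro w v
      constructor
      · rintro ⟨x, hx, hs⟩
        obtain ⟨u, hu, hr⟩ := (ih x v).1 hs
        exact ⟨u, ⟨x, hx, hu⟩, hr⟩
      · rintro ⟨u, ⟨x, hx, hs⟩, hr⟩
        exact ⟨x, hx, (ih x v).2 ⟨u, hs, hr⟩⟩

lemma sat_boxIter (F : FFrame) (V : F.W → ℕ → Prop) (θ : MForm ℕ) :
    ∀ (k : ℕ) (w : F.W), sat F V w (boxIter k θ) ↔ ∀ u, stepR F k w u → sat F V u θ := by
  intro k
  induction k with
  | zero => intro w; simp [boxIter, stepR]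
  | succ n ih =>
      intro w
      simp only [boxIter, sat]
      constructor
      · rintro h u ⟨v, hv, hs⟩
        exact (ih v).1 (h v hv) u hs
      · intro h v hv
        exact (ih v).2 fun u hu => h u ⟨v, hv, hu⟩

lemma sat_ble (F : FFrame) (V : F.W → ℕ → Prop) (θ : MForm ℕ) (d : ℕ) (w : F.W) :
    sat F V w (ble d θ) ↔ ∀ k ≤ d, ∀ u, stepR F k w u → sat F V u θ := by
  simp only [ble, sat_bigAnd]
  constructor
  · intro h k hk u hu
    exact (sat_boxIter F V θ k w).1
      (h _ (List.mem_map_of_mem (List.mem_range.2 (by omega)))) u hu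
  · intro h ψ hψ
    simp only [List.mem_map, List.mem_range] at hψ
    obtain ⟨k, hk, rfl⟩ := hψ
    exact (sat_boxIter F V θ k w).2 fun u hu => h k (by omega) u hu

lemma sig_boxIter (θ : MForm ℕ) : ∀ k, (boxIter k θ).sig = θ.sig := by
  intro k; induction k with
  | zero => rfl
  | succ n ih => simpa [boxIter, MForm.sig] using ih

lemma sig_ble (θ : MForm ℕ) (d : ℕ) : (ble d θ).sig ⊆ θ.sig := by
  apply sig_bigAnd_subset
  intro ψ hψ
  simp only [List.mem_map, List.mem_range] at hψ
  obtain ⟨k, hk, rfl⟩ := hψ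
  rw [sig_boxIter]

/-- An increasing chain of finsets stabilizes within `Fintype.card` steps. -/
lemma chain_stab {α : Type} [Fintype α] (c : ℕ → Finset α)
    (mono : ∀ n, c n ⊆ c (n+1)) : ∃ m ≤ Fintype.card α, c m = c (m+1) := by
  by_contra h
  push_neg at h
  have key : ∀ m, m ≤ Fintype.card α + 1 → m ≤ (c m).card := by
    intro m hm
    induction m with
    | zero => omega
    | succ k ih =>
        have h1 : c k ⊂ c (k+1) :=
          HasSubset.Subset.ssubset_of_ne (mono k) (h k (by omega))
        have h2 := Finset.card_lt_card h1
        have h3 := ih (by omega)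
        omega
    
  have h4 := key (Fintype.card α + 1) le_rfl
  have h5 := Finset.card_le_univ (c (Fintype.card α + 1))
  omega

lemma reach_bound (F : FFrame) (u : F.W) :
    ∃ k ≤ Fintype.card F.W, stepR F k F.root u := by
  classical
  set S : ℕ → Finset F.W :=
    fun n => Finset.univ.filter (fun u => ∃ k ≤ n, stepR F k F.root u) with hS
  have hmem : ∀ n u, u ∈ S n ↔ ∃ k ≤ n, stepR F k F.root u := by
    intro n u; simp [hS]
  have hmono : ∀ n, S n ⊆ S (n+1) := by
    intro n x hx
    rw [hmem] at hx ⊢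
    obtain ⟨k, hk, hs⟩ := hx
    exact ⟨k, by omega, hs⟩
  obtain ⟨m, hm, heq⟩ := chain_stab S hmono
  have hclosed : ∀ x, Relation.ReflTransGen F.R F.root x → x ∈ S m := by
    intro x hx
    induction hx with
    | refl => rw [hmem]; exact ⟨0, by omega, rfl⟩
    | tail hab hbc ih =>
        rw [heq, hmem]
        rw [hmem] at ih
        obtain ⟨k, hk, hs⟩ := ih
        exact ⟨k+1, by omega, stepR_snoc F k _ _ _ hs hbc⟩
  have := hclosed u (F.rooted u)
  rw [hmem] at this
  obtain ⟨k, hk, hs⟩ := this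
  exact ⟨k, by omega, hs⟩

end Aux2
section Aux3
open MForm

variable (σ : Finset ℕ)

def NEquiv (F₁ : FFrame) (V₁ : F₁.W → ℕ → Prop) (F₂ : FFrame) (V₂ : F₂.W → ℕ → Prop) :
    ℕ → F₁.W → F₂.W → Prop
  | 0, w, v => ∀ p ∈ σ, (V₁ w p ↔ V₂ v p)
  | n+1, w, v => (∀ p ∈ σ, (V₁ w p ↔ V₂ v p)) ∧
      (∀ w', F₁.R w w' → ∃ v', F₂.R v v' ∧ NEquiv F₁ V₁ F₂ V₂ n w' v') ∧
      (∀ v', F₂.R v v' → ∃ w', F₁.R w w' ∧ NEquiv F₁ V₁ F₂ V₂ n w' v')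

variable {F₁ F₂ : FFrame} {V₁ : F₁.W → ℕ → Prop} {V₂ : F₂.W → ℕ → Prop}

lemma nequiv_atoms {n : ℕ} {w : F₁.W} {v : F₂.W} (h : NEquiv σ F₁ V₁ F₂ V₂ n w v) :
    ∀ p ∈ σ, (V₁ w p ↔ V₂ v p) := by
  cases n with
  | zero => exact h
  | succ k => exact h.1

lemma nequiv_mono : ∀ (n : ℕ) (w : F₁.W) (v : F₂.W),
    NEquiv σ F₁ V₁ F₂ V₂ (n+1) w v → NEquiv σ F₁ V₁ F₂ V₂ n w v := by
  intro n
  induction n with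
  | zero => intro w v h; exact h.1
  | succ k ih =>
      rintro w v ⟨ha, hf, hb⟩
      refine ⟨ha, ?_, ?_⟩
      · intro w' hw'
        obtain ⟨v', hv', h'⟩ := hf w' hw'
        exact ⟨v', hv', ih _ _ h'⟩
      · intro v' hv'
        obtain ⟨w', hw', h'⟩ := hb v' hv'
        exact ⟨w', hw', ih _ _ h'⟩

lemma nequiv_le {m n : ℕ} (hmn : m ≤ n) : ∀ (w : F₁.W) (v : F₂.W),
    NEquiv σ F₁ V₁ F₂ V₂ n w v → NEquiv σ F₁ V₁ F₂ V₂ m w v := by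
  obtain ⟨d, rfl⟩ := Nat.exists_eq_add_of_le hmn
  induction d with
  | zero => intro w v h; exact h
  | succ k ih =>
      intro w v h
      exact ih (by omega) w v (nequiv_mono σ (m+k) w v h)

lemma nequiv_of_agree {F : FFrame} {V V' : F.W → ℕ → Prop}
    (h : ∀ w, ∀ p ∈ σ, (V w p ↔ V' w p)) :
    ∀ (n : ℕ) (w : F.W), NEquiv σ F V F V' n w w := by
  intro n
  induction n with
  | zero => intro w; exact h w
  | succ k ih =>
      intro w
      exact ⟨h w, fun w' hw' => ⟨w', hw', ih w'⟩, fun v' hv' => ⟨v', hv', ih v'⟩⟩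

lemma nequiv_congr_left {V₁' : F₁.W → ℕ → Prop}
    (h : ∀ w, ∀ p ∈ σ, (V₁ w p ↔ V₁' w p)) :
    ∀ (n : ℕ) (w : F₁.W) (v : F₂.W),
      NEquiv σ F₁ V₁ F₂ V₂ n w v ↔ NEquiv σ F₁ V₁' F₂ V₂ n w v := by
  intro n
  induction n with
  | zero =>
      intro w v
      constructor <;> intro hh p hp
      · rw [← h w p hp]; exact hh p hp
      · rw [h w p hp]; exact hh p hp
  | succ k ih =>
      intro w v
      constructor <;> rintro ⟨ha, hf, hb⟩
      · refine ⟨fun p hp => by rw [← h w p hp]; exact ha p hp, ?_, ?_⟩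
        · intro w' hw'; obtain ⟨v', hv', h'⟩ := hf w' hw'; exact ⟨v', hv', (ih w' v').1 h'⟩
        · intro v' hv'; obtain ⟨w', hw', h'⟩ := hb v' hv'; exact ⟨w', hw', (ih w' v').1 h'⟩
      · refine ⟨fun p hp => by rw [h w p hp]; exact ha p hp, ?_, ?_⟩
        · intro w' hw'; obtain ⟨v', hv', h'⟩ := hf w' hw'; exact ⟨v', hv', (ih w' v').2 h'⟩
        · intro v' hv'; obtain ⟨w', hw', h'⟩ := hb v' hv'; exact ⟨w', hw', (ih w' v').2 h'⟩

/-- On finite frames, `card (W₁ × W₂)`-equivalence of the designated points implies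
bisimilarity. -/
lemma bisim_of_nequiv {w : F₁.W} {v : F₂.W} {n : ℕ}
    (hn : Fintype.card (F₁.W × F₂.W) ≤ n)
    (h : NEquiv σ F₁ V₁ F₂ V₂ n w v) : Bisim σ F₁ V₁ w F₂ V₂ v := by
  classical
  set K := Fintype.card (F₁.W × F₂.W) with hK
  set E : ℕ → Finset (F₁.W × F₂.W) :=
    fun n => Finset.univ.filter (fun p => ¬ NEquiv σ F₁ V₁ F₂ V₂ n p.1 p.2) with hE
  have hmono : ∀ n, E n ⊆ E (n+1) := by
    intro n x hx
    simp only [hE, Finset.mem_filter, Finset.mem_univ, true_and] at hx ⊢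
    exact fun hc => hx (nequiv_mono σ n x.1 x.2 hc)
  obtain ⟨m, hm, heq⟩ := chain_stab E hmono
  have hstable : ∀ a b, NEquiv σ F₁ V₁ F₂ V₂ m a b ↔ NEquiv σ F₁ V₁ F₂ V₂ (m+1) a b := by
    intro a b
    have : (a, b) ∈ E m ↔ (a, b) ∈ E (m+1) := by rw [heq]
    simp only [hE, Finset.mem_filter, Finset.mem_univ, true_and] at this
    constructor
    · intro hh
      by_contra hc
      exact (this.2 hc) hh
    · intro hh
      exact nequiv_mono σ m a b hh
  -- Z := NEquiv at level m is a bisimulation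
  refine ⟨fun a b => NEquiv σ F₁ V₁ F₂ V₂ m a b, ⟨?_, ?_, ?_⟩, ?_⟩
  · intro a b hab
    exact nequiv_atoms σ hab
  · intro a b a' hab ha'
    obtain ⟨b', hb', h'⟩ := ((hstable a b).1 hab).2.1 a' ha'
    exact ⟨b', hb', h'⟩
  · intro a b b' hab hb'
    obtain ⟨a', ha', h'⟩ := ((hstable a b).1 hab).2.2 b' hb'
    exact ⟨a', ha', h'⟩
  · exact nequiv_le σ (by omega) w v h

lemma bisim_invariant {Z : F₁.W → F₂.W → Prop}
    (hZ : IsBisim σ F₁ V₁ F₂ V₂ Z) (θ : MForm ℕ) (hsig : θ.sig ⊆ σ) :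
    ∀ w v, Z w v → (sat F₁ V₁ w θ ↔ sat F₂ V₂ v θ) := by
  obtain ⟨hat, hf, hb⟩ := hZ
  induction θ with
  | top => intro w v _; simp [sat]
  | atom p =>
      intro w v hwv
      have hp : p ∈ σ := hsig (by simp [MForm.sig])
      simpa [sat] using hat w v hwv p hp
  | neg φ ih =>
      intro w v hwv
      simp only [sat]
      rw [ih hsig w v hwv]
  | and φ ψ ih1 ih2 =>
      intro w v hwv
      have h1 : φ.sig ⊆ σ := fun p hp => hsig (by simp [MForm.sig, hp])
      have h2 : ψ.sig ⊆ σ := fun p hp => hsig (by simp [MForm.sig, hp])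
      simp only [sat]
      rw [ih1 h1 w v hwv, ih2 h2 w v hwv]
  | box φ ih =>
      intro w v hwv
      simp only [sat]
      constructor
      · intro hh v' hv'
        obtain ⟨w', hw', h'⟩ := hb w v v' hwv hv'
        exact (ih hsig w' v' h').1 (hh w' hw')
      · intro hh w' hw'
        obtain ⟨v', hv', h'⟩ := hf w v w' hwv hw'
        exact (ih hsig w' v' h').2 (hh v' hv')

end Aux3
section Aux4
open MForm

open scoped Classical in
/-- Characteristic formula of depth `n` of a pointed model over signature `σ`. -/
noncomputable def charF (σ : Finset ℕ) (F : FFrame) (V : F.W → ℕ → Prop) : ℕ → F.W → MForm ℕ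
  | 0, w => bigAnd (σ.toList.map fun p => if V w p then .atom p else .neg (.atom p))
  | n+1, w => .and (charF σ F V 0 w) (.and
      (bigAnd ((Finset.univ.filter (F.R w)).toList.map fun v => MForm.dia (charF σ F V n v)))
      (.box (bigOr ((Finset.univ.filter (F.R w)).toList.map fun v => charF σ F V n v))))

lemma charF_sig (σ : Finset ℕ) (F : FFrame) (V : F.W → ℕ → Prop) :
    ∀ (n : ℕ) (w : F.W), (charF σ F V n w).sig ⊆ σ := by
  classical
  intro n
  induction n with
  | zero =>
      intro w
      rw [charF]
      apply sig_bigAnd_subset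
      intro θ hθ
      simp only [List.mem_map, Finset.mem_toList] at hθ
      obtain ⟨p, hp, rfl⟩ := hθ
      split <;> simp [MForm.sig, hp]
  | succ k ih =>
      intro w
      rw [charF]
      simp only [MForm.sig, Finset.union_subset_iff]
      refine ⟨?_, ?_, ?_⟩
      · intro p hp
        have h0 : (charF σ F V 0 w).sig ⊆ σ := by
          rw [charF]
          apply sig_bigAnd_subset
          intro θ hθ
          simp only [List.mem_map, Finset.mem_toList] at hθ
          obtain ⟨q, hq, rfl⟩ := hθ
          split <;> simp [MForm.sig, hq]
        exact h0 hp
      · apply sig_bigAnd_subset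
        intro θ hθ
        simp only [List.mem_map, Finset.mem_toList] at hθ
        obtain ⟨v, hv, rfl⟩ := hθ
        simpa [MForm.dia, MForm.sig] using ih v
      · apply sig_bigOr_subset
        intro θ hθ
        simp only [List.mem_map, Finset.mem_toList] at hθ
        obtain ⟨v, hv, rfl⟩ := hθ
        exact ih v

lemma charF_zero_spec (σ : Finset ℕ) (F : FFrame) (V : F.W → ℕ → Prop)
    (w : F.W) (G : FFrame) (U : G.W → ℕ → Prop) (v : G.W) :
    sat G U v (charF σ F V 0 w) ↔ ∀ p ∈ σ, (V w p ↔ U v p) := by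
  classical
  rw [charF, sat_bigAnd]
  constructor
  · intro h p hp
    have := h _ (List.mem_map_of_mem (Finset.mem_toList.2 hp))
    by_cases hV : V w p
    · simp only [if_pos hV, sat] at this; tauto
    · simp only [if_neg hV, sat] at this; tauto
  · intro h θ hθ
    simp only [List.mem_map, Finset.mem_toList] at hθ
    obtain ⟨p, hp, rfl⟩ := hθ
    by_cases hV : V w p
    · simp only [if_pos hV, sat]; exact (h p hp).1 hV
    · simp only [if_neg hV, sat]; exact fun hc => hV ((h p hp).2 hc)

lemma charF_spec (σ : Finset ℕ) (F : FFrame) (V : F.W → ℕ → Prop) :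
    ∀ (n : ℕ) (w : F.W) (G : FFrame) (U : G.W → ℕ → Prop) (v : G.W),
      sat G U v (charF σ F V n w) ↔ NEquiv σ F V G U n w v := by
  classical
  intro n
  induction n with
  | zero =>
      intro w G U v
      rw [NEquiv]
      exact charF_zero_spec σ F V w G U v
  | succ k ih =>
      intro w G U v
      rw [charF]
      simp only [sat, NEquiv]
      constructor
      · rintro ⟨h0, h1, h2⟩
        refine ⟨(charF_zero_spec σ F V w G U v).1 h0, ?_, ?_⟩
        · intro w' hw'
          have hmem : MForm.dia (charF σ F V k w') ∈
              (Finset.univ.filter (F.R w)).toList.map (fun v => MForm.dia (charF σ F V k v)) :=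
            List.mem_map_of_mem (Finset.mem_toList.2 (by simp [hw']))
          have := (sat_bigAnd G U v _).1 h1 _ hmem
          rw [sat_dia] at this
          obtain ⟨v', hv', hs⟩ := this
          exact ⟨v', hv', (ih w' G U v').1 hs⟩
        · intro v' hv'
          have h2' : sat G U v' (bigOr ((Finset.univ.filter (F.R w)).toList.map
              (fun v => charF σ F V k v))) := h2 v' hv'
          obtain ⟨θ, hθ, hs⟩ := (sat_bigOr G U v' _).1 h2' 
          simp only [List.mem_map, Finset.mem_toList, Finset.mem_filter, Finset.mem_univ,
            true_and] at hθ
          obtain ⟨w', hw', rfl⟩ := hθ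
          exact ⟨w', hw', (ih w' G U v').1 hs⟩
      · rintro ⟨ha, hf, hb⟩
        refine ⟨(charF_zero_spec σ F V w G U v).2 ha, ?_, ?_⟩
        · rw [sat_bigAnd]
          intro θ hθ
          simp only [List.mem_map, Finset.mem_toList, Finset.mem_filter, Finset.mem_univ,
            true_and] at hθ
          obtain ⟨w', hw', rfl⟩ := hθ
          obtain ⟨v', hv', h'⟩ := hf w' hw'
          rw [sat_dia]
          exact ⟨v', hv', (ih w' G U v').2 h'⟩
        · intro v' hv'
          apply (sat_bigOr G U v' _).2
          obtain ⟨w', hw', h'⟩ := hb v' hv'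
          exact ⟨charF σ F V k w',
            List.mem_map_of_mem (Finset.mem_toList.2 (by simp [hw'])),
            (ih w' G U v').2 h'⟩

end Aux4
section Aux5
open MForm

def Vof (σ : Finset ℕ) (W : Type) (f : W → {p // p ∈ σ} → Bool) : W → ℕ → Prop :=
  fun w p => ∃ hp : p ∈ σ, f w ⟨p, hp⟩ = true

open scoped Classical in
noncomputable def goods (σ : Finset ℕ) (F : FFrame) (φ : MForm ℕ) :
    Finset (F.W → {p // p ∈ σ} → Bool) :=
  Finset.univ.filter (fun f => ∃ V, sat F V F.root φ ∧
    ∀ w, ∀ p ∈ σ, (V w p ↔ Vof σ F.W f w p))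

noncomputable def chiInt {ι : Type} [Fintype ι] (Fr : ι → FFrame) (σ : Finset ℕ) (n : ℕ)
    (φ : MForm ℕ) : MForm ℕ :=
  bigOr ((Finset.univ : Finset ι).toList.map fun i =>
    bigOr ((goods σ (Fr i) φ).toList.map fun f =>
      charF σ (Fr i) (Vof σ (Fr i).W f) n (Fr i).root))

lemma chiInt_sig {ι : Type} [Fintype ι] (Fr : ι → FFrame) (σ : Finset ℕ) (n : ℕ)
    (φ : MForm ℕ) : (chiInt Fr σ n φ).sig ⊆ σ := by
  apply sig_bigOr_subset
  intro θ hθ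
  simp only [List.mem_map, Finset.mem_toList] at hθ
  obtain ⟨i, _, rfl⟩ := hθ
  apply sig_bigOr_subset
  intro θ hθ
  simp only [List.mem_map, Finset.mem_toList] at hθ
  obtain ⟨f, _, rfl⟩ := hθ
  exact charF_sig σ (Fr i) _ n _

lemma cip_of_iso {ι : Type} [Fintype ι] (Fr : ι → FFrame)
    (hyp : ∀ (σ : Finset ℕ) (i j : ι) (V₁ : (Fr i).W → ℕ → Prop) (V₂ : (Fr j).W → ℕ → Prop),
        Bisim σ (Fr i) V₁ (Fr i).root (Fr j) V₂ (Fr j).root →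
        i = j ∧
        ∃ g : (Fr i).W ≃ (Fr j).W,
          g (Fr i).root = (Fr j).root ∧
          (∀ a b : (Fr i).W, (Fr i).R a b ↔ (Fr j).R (g a) (g b)) ∧
          (∀ w : (Fr i).W, ∀ p ∈ σ, (V₁ w p ↔ V₂ (g w) p))) :
    HasCIP (Log Fr) := by
  classical
  intro φ ψ himp
  set σ := φ.sig ∩ ψ.sig with hσ
  set n := ∑ i : ι, ∑ j : ι, Fintype.card ((Fr i).W × (Fr j).W) with hn
  have hnge : ∀ i j : ι, Fintype.card ((Fr i).W × (Fr j).W) ≤ n := by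
    intro i j
    have h1 : (∑ j' : ι, Fintype.card ((Fr i).W × (Fr j').W)) ≤ n :=
      Finset.single_le_sum (f := fun i' => ∑ j' : ι, Fintype.card ((Fr i').W × (Fr j').W))
        (fun _ _ => Nat.zero_le _) (Finset.mem_univ i)
    have h2 : Fintype.card ((Fr i).W × (Fr j).W) ≤
        ∑ j' : ι, Fintype.card ((Fr i).W × (Fr j').W) :=
      Finset.single_le_sum (f := fun j' => Fintype.card ((Fr i).W × (Fr j').W))
        (fun _ _ => Nat.zero_le _) (Finset.mem_univ j)
    omega
  refine ⟨chiInt Fr σ n φ, ?_, ?_, ?_⟩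
  · -- φ → χ
    intro i V
    rw [sat_imp]
    intro hφ
    set f : (Fr i).W → {p // p ∈ σ} → Bool := fun w q => decide (V w q.1) with hf
    have hagree : ∀ w, ∀ p ∈ σ, (V w p ↔ Vof σ (Fr i).W f w p) := by
      intro w p hp
      constructor
      · intro h; exact ⟨hp, by simpa [hf] using h⟩
      · rintro ⟨hp', h⟩; simpa [hf] using h
    have hfg : f ∈ goods σ (Fr i) φ := by
      rw [goods, Finset.mem_filter]
      exact ⟨Finset.mem_univ _, V, hφ, hagree⟩
    have hsat : sat (Fr i) V (Fr i).root (charF σ (Fr i) (Vof σ (Fr i).W f) n (Fr i).root) := by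
      rw [charF_spec]
      exact nequiv_of_agree σ (fun w p hp => (hagree w p hp).symm) n (Fr i).root
    apply (sat_bigOr _ _ _ _).2
    refine ⟨_, List.mem_map_of_mem (Finset.mem_toList.2 (Finset.mem_univ i)), ?_⟩
    apply (sat_bigOr _ _ _ _).2
    exact ⟨_, List.mem_map_of_mem (Finset.mem_toList.2 hfg), hsat⟩
  · -- χ → ψ
    intro j V₂
    rw [sat_imp]
    intro hχ
    obtain ⟨θ, hθmem, hθ⟩ := (sat_bigOr _ _ _ _).1 hχ
    simp only [List.mem_map, Finset.mem_toList] at hθmem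
    obtain ⟨i, _, rfl⟩ := hθmem
    obtain ⟨θ', hθ'mem, hθ'⟩ := (sat_bigOr _ _ _ _).1 hθ
    simp only [List.mem_map, Finset.mem_toList] at hθ'mem
    obtain ⟨f, hfg, rfl⟩ := hθ'mem
    rw [goods, Finset.mem_filter] at hfg
    obtain ⟨-, V₁, hφ1, hagree⟩ := hfg
    rw [charF_spec] at hθ'
    have hne : NEquiv σ (Fr i) V₁ (Fr j) V₂ n (Fr i).root (Fr j).root :=
      (nequiv_congr_left σ (fun w p hp => (hagree w p hp).symm) n _ _).1 hθ'
    have hbis : Bisim σ (Fr i) V₁ (Fr i).root (Fr j) V₂ (Fr j).root :=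
      bisim_of_nequiv σ (hnge i j) hne
    obtain ⟨hij, g, hroot, hR, hat⟩ := hyp σ i j V₁ V₂ hbis
    set V₃ : (Fr j).W → ℕ → Prop :=
      fun w p => if p ∈ φ.sig then V₁ (g.symm w) p else V₂ w p with hV₃
    have hsat3 : sat (Fr j) V₃ (Fr j).root φ := by
      have := (sat_iso (Fr i) (Fr j) g hR V₁ V₃ φ ?_ (Fr i).root).1 hφ1
      · rwa [hroot] at this
      · intro w p hp
        simp [hV₃, hp]
    have hψ3 : sat (Fr j) V₃ (Fr j).root ψ := by
      have := himp j V₃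
      rw [sat_imp] at this
      exact this hsat3
    have hagree2 : ∀ w, ∀ p ∈ ψ.sig, (V₃ w p ↔ V₂ w p) := by
      intro w p hp
      by_cases hpφ : p ∈ φ.sig
      · have hpσ : p ∈ σ := by rw [hσ]; exact Finset.mem_inter.2 ⟨hpφ, hp⟩
        have := hat (g.symm w) p hpσ
        simp only [hV₃, if_pos hpφ]
        rw [this, g.apply_symm_apply]
      · simp [hV₃, hpφ]
    exact (sat_agree (Fr j) V₃ V₂ ψ hagree2 _).1 hψ3
  · exact chiInt_sig Fr σ n φ

end Aux5
section Aux6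
open MForm

open scoped Classical in
noncomputable def descBody (σ : Finset ℕ) (F : FFrame) (V : F.W → ℕ → Prop)
    (ν : F.W → ℕ) (w : F.W) : MForm ℕ :=
  .and (bigAnd (Finset.univ.toList.map fun w' =>
      if w' = w then .top else .neg (.atom (ν w'))))
  (.and (bigAnd (σ.toList.map fun p => if V w p then .atom p else .neg (.atom p)))
  (.and (bigAnd ((Finset.univ.filter (F.R w)).toList.map fun v => MForm.dia (.atom (ν v))))
  (.box (bigOr ((Finset.univ.filter (F.R w)).toList.map fun v => .atom (ν v))))))

noncomputable def descTh (σ : Finset ℕ) (F : FFrame) (V : F.W → ℕ → Prop)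
    (ν : F.W → ℕ) : MForm ℕ :=
  .and (bigOr (Finset.univ.toList.map fun w => .atom (ν w)))
       (bigAnd (Finset.univ.toList.map fun w =>
          MForm.imp (.atom (ν w)) (descBody σ F V ν w)))

noncomputable def desc (σ : Finset ℕ) (F : FFrame) (V : F.W → ℕ → Prop)
    (ν : F.W → ℕ) (d : ℕ) : MForm ℕ :=
  .and (.atom (ν F.root)) (ble d (descTh σ F V ν))

lemma desc_sig (σ : Finset ℕ) (F : FFrame) (V : F.W → ℕ → Prop) (ν : F.W → ℕ) (d : ℕ) :
    (desc σ F V ν d).sig ⊆ σ ∪ Finset.univ.image ν := by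
  classical
  have hbody : ∀ w, (descBody σ F V ν w).sig ⊆ σ ∪ Finset.univ.image ν := by
    intro w
    simp only [descBody, MForm.sig, Finset.union_subset_iff]
    refine ⟨?_, ?_, ?_, ?_⟩
    · apply sig_bigAnd_subset
      intro θ hθ
      simp only [List.mem_map, Finset.mem_toList] at hθ
      obtain ⟨w', _, rfl⟩ := hθ
      split
      · simp [MForm.sig]
      · intro p hp
        simp only [MForm.sig, Finset.mem_singleton] at hp
        subst hp
        exact Finset.mem_union_right _ (Finset.mem_image_of_mem _ (Finset.mem_univ _))
    · apply sig_bigAnd_subset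
      intro θ hθ
      simp only [List.mem_map, Finset.mem_toList] at hθ
      obtain ⟨p, hp, rfl⟩ := hθ
      split <;>
      · intro q hq
        simp only [MForm.sig, Finset.mem_singleton] at hq
        subst hq
        exact Finset.mem_union_left _ hp
    · apply sig_bigAnd_subset
      intro θ hθ
      simp only [List.mem_map, Finset.mem_toList] at hθ
      obtain ⟨v, _, rfl⟩ := hθ
      intro q hq
      simp only [MForm.dia, MForm.sig, Finset.mem_singleton] at hq
      subst hq
      exact Finset.mem_union_right _ (Finset.mem_image_of_mem _ (Finset.mem_univ _))
    · apply sig_bigOr_subset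
      intro θ hθ
      simp only [List.mem_map, Finset.mem_toList] at hθ
      obtain ⟨v, _, rfl⟩ := hθ
      intro q hq
      simp only [MForm.sig, Finset.mem_singleton] at hq
      subst hq
      exact Finset.mem_union_right _ (Finset.mem_image_of_mem _ (Finset.mem_univ _))
  have hth : (descTh σ F V ν).sig ⊆ σ ∪ Finset.univ.image ν := by
    simp only [descTh, MForm.sig, Finset.union_subset_iff]
    constructor
    · apply sig_bigOr_subset
      intro θ hθ
      simp only [List.mem_map, Finset.mem_toList] at hθ
      obtain ⟨w, _, rfl⟩ := hθ
      intro q hq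
      simp only [MForm.sig, Finset.mem_singleton] at hq
      subst hq
      exact Finset.mem_union_right _ (Finset.mem_image_of_mem _ (Finset.mem_univ _))
    · apply sig_bigAnd_subset
      intro θ hθ
      simp only [List.mem_map, Finset.mem_toList] at hθ
      obtain ⟨w, _, rfl⟩ := hθ
      have heq : (MForm.imp (.atom (ν w)) (descBody σ F V ν w)).sig
          = {ν w} ∪ (descBody σ F V ν w).sig := rfl
      rw [heq]
      apply Finset.union_subset ?_ (hbody w)
      intro q hq
      simp only [Finset.mem_singleton] at hq
      subst hq
      exact Finset.mem_union_right _ (Finset.mem_image_of_mem _ (Finset.mem_univ _))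
  simp only [desc, MForm.sig, Finset.union_subset_iff]
  constructor
  · intro q hq
    simp only [Finset.mem_singleton] at hq
    subst hq
    exact Finset.mem_union_right _ (Finset.mem_image_of_mem _ (Finset.mem_univ _))
  · exact fun q hq => hth (sig_ble _ d hq)

def canonV (σ : Finset ℕ) (F : FFrame) (V : F.W → ℕ → Prop) (ν : F.W → ℕ) :
    F.W → ℕ → Prop :=
  fun w q => if q ∈ Finset.univ.image ν then q = ν w else V w q

lemma canonV_name (σ : Finset ℕ) (F : FFrame) (V : F.W → ℕ → Prop) (ν : F.W → ℕ)
    (w w' : F.W) : canonV σ F V ν w (ν w') ↔ ν w' = ν w := by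
  classical
  simp [canonV, Finset.mem_image_of_mem _ (Finset.mem_univ w')]

lemma canonV_atom (σ : Finset ℕ) (F : FFrame) (V : F.W → ℕ → Prop) (ν : F.W → ℕ)
    (hfresh : ∀ w, ν w ∉ σ) (w : F.W) (p : ℕ) (hp : p ∈ σ) :
    canonV σ F V ν w p ↔ V w p := by
  classical
  have : p ∉ Finset.univ.image ν := by
    intro hc
    obtain ⟨w', _, rfl⟩ := Finset.mem_image.1 hc
    exact hfresh w' hp
  simp [canonV, this]

lemma desc_selfsat (σ : Finset ℕ) (F : FFrame) (V : F.W → ℕ → Prop) (ν : F.W → ℕ)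
    (hinj : Function.Injective ν) (hfresh : ∀ w, ν w ∉ σ) (d : ℕ) :
    sat F (canonV σ F V ν) F.root (desc σ F V ν d) := by
  classical
  set U := canonV σ F V ν with hU
  have hθ : ∀ u, sat F U u (descTh σ F V ν) := by
    intro u
    rw [descTh]
    refine ⟨?_, ?_⟩
    · apply (sat_bigOr _ _ _ _).2
      refine ⟨.atom (ν u), List.mem_map_of_mem (Finset.mem_toList.2 (Finset.mem_univ u)), ?_⟩
      show U u (ν u)
      rw [hU, canonV_name]
    · apply (sat_bigAnd _ _ _ _).2
      intro θ hθ
      simp only [List.mem_map, Finset.mem_toList] at hθ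
      obtain ⟨w, _, rfl⟩ := hθ
      rw [sat_imp]
      intro hw
      have hwu : w = u := hinj ((canonV_name σ F V ν u w).1 hw)
      subst hwu
      rw [descBody]
      refine ⟨?_, ?_, ?_, ?_⟩
      · apply (sat_bigAnd _ _ _ _).2
        intro θ hθ
        simp only [List.mem_map, Finset.mem_toList] at hθ
        obtain ⟨w', _, rfl⟩ := hθ
        by_cases hww : w' = w
        · simp [hww, sat]
        · simp only [if_neg hww]
          show ¬ U w (ν w')
          rw [hU, canonV_name]
          intro hc
          exact hww (hinj hc)
      · apply (sat_bigAnd _ _ _ _).2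
        intro θ hθ
        simp only [List.mem_map, Finset.mem_toList] at hθ
        obtain ⟨p, hp, rfl⟩ := hθ
        by_cases hV : V w p
        · simp only [if_pos hV]
          show U w p
          rw [hU, canonV_atom σ F V ν hfresh w p hp]
          exact hV
        · simp only [if_neg hV]
          show ¬ U w p
          rw [hU, canonV_atom σ F V ν hfresh w p hp]
          exact hV
      · apply (sat_bigAnd _ _ _ _).2
        intro θ hθ
        simp only [List.mem_map, Finset.mem_toList, Finset.mem_filter, Finset.mem_univ,
          true_and] at hθ
        obtain ⟨v, hv, rfl⟩ := hθ
        rw [sat_dia]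
        refine ⟨v, hv, ?_⟩
        show U v (ν v)
        rw [hU, canonV_name]
      · intro v' hv'
        apply (sat_bigOr _ _ _ _).2
        refine ⟨.atom (ν v'), List.mem_map_of_mem (Finset.mem_toList.2 (by simp [hv'])), ?_⟩
        show U v' (ν v')
        rw [hU, canonV_name]
  refine ⟨?_, ?_⟩
  · show U F.root (ν F.root)
    rw [hU, canonV_name]
  · rw [sat_ble]
    intro k _ u _
    exact hθ u

end Aux6
section Aux7
open MForm

lemma desc_extract (σ : Finset ℕ) (F : FFrame) (V : F.W → ℕ → Prop) (ν : F.W → ℕ)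
    (hinj : Function.Injective ν) (d : ℕ)
    (G : FFrame) (U : G.W → ℕ → Prop)
    (hd : ∀ u : G.W, ∃ k ≤ d, stepR G k G.root u)
    (hsat : sat G U G.root (desc σ F V ν d)) :
    ∃ h : G.W → F.W, h G.root = F.root ∧
      (∀ u, ∀ p ∈ σ, (U u p ↔ V (h u) p)) ∧
      (∀ u u', G.R u u' → F.R (h u) (h u')) ∧
      (∀ u v, F.R (h u) v → ∃ u', G.R u u' ∧ h u' = v) ∧
      Function.Surjective h := by
  classical
  obtain ⟨hra, hble⟩ := hsat
  have hθall : ∀ u, sat G U u (descTh σ F V ν) := by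
    intro u
    obtain ⟨k, hk, hs⟩ := hd u
    exact (sat_ble G U _ d G.root).1 hble k hk u hs
  have hname : ∀ u, ∃ w, U u (ν w) := by
    intro u
    obtain ⟨hex, _⟩ := hθall u
    obtain ⟨θ, hθ, hs⟩ := (sat_bigOr _ _ _ _).1 hex
    simp only [List.mem_map, Finset.mem_toList] at hθ
    obtain ⟨w, _, rfl⟩ := hθ
    exact ⟨w, hs⟩
  have hbody : ∀ u w, U u (ν w) → sat G U u (descBody σ F V ν w) := by
    intro u w hw
    obtain ⟨_, hall⟩ := hθall u
    have := (sat_bigAnd _ _ _ _).1 hall (MForm.imp (.atom (ν w)) (descBody σ F V ν w))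
      (List.mem_map_of_mem (Finset.mem_toList.2 (Finset.mem_univ w)))
    rw [sat_imp] at this
    exact this hw
  have huniq : ∀ u w w', U u (ν w) → U u (ν w') → w' = w := by
    intro u w w' hw hw'
    by_contra hne
    have hb := hbody u w hw
    rw [descBody] at hb
    obtain ⟨h1, _, _, _⟩ := hb
    have := (sat_bigAnd _ _ _ _).1 h1 (if w' = w then .top else .neg (.atom (ν w')))
      (List.mem_map_of_mem (Finset.mem_toList.2 (Finset.mem_univ w')))
    rw [if_neg hne] at this
    exact this hw'
  set h : G.W → F.W := fun u => Classical.choose (hname u) with hh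
  have hhu : ∀ u, U u (ν (h u)) := fun u => Classical.choose_spec (hname u)
  have hspec : ∀ u w, U u (ν w) → h u = w := by
    intro u w hw
    exact (huniq u w (h u) hw (hhu u)).symm ▸ rfl
  refine ⟨h, ?_, ?_, ?_, ?_, ?_⟩
  · exact hspec G.root F.root hra
  · intro u p hp
    obtain ⟨_, h2, _, _⟩ := hbody u (h u) (hhu u)
    have := (sat_bigAnd _ _ _ _).1 h2 (if V (h u) p then .atom p else .neg (.atom p))
      (List.mem_map_of_mem (Finset.mem_toList.2 hp))
    by_cases hV : V (h u) p
    · rw [if_pos hV] at this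
      exact ⟨fun _ => hV, fun _ => this⟩
    · rw [if_neg hV] at this
      exact ⟨fun hc => absurd hc this, fun hc => absurd hc hV⟩
  · intro u u' hr
    obtain ⟨_, _, _, h4⟩ := hbody u (h u) (hhu u)
    have := h4 u' hr
    obtain ⟨θ, hθ, hs⟩ := (sat_bigOr _ _ _ _).1 this
    simp only [List.mem_map, Finset.mem_toList, Finset.mem_filter, Finset.mem_univ,
      true_and] at hθ
    obtain ⟨v, hv, rfl⟩ := hθ
    rw [hspec u' v hs]
    exact hv
  · intro u v hr
    obtain ⟨_, _, h3, _⟩ := hbody u (h u) (hhu u)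
    have := (sat_bigAnd _ _ _ _).1 h3 (MForm.dia (.atom (ν v)))
      (List.mem_map_of_mem (Finset.mem_toList.2 (by simp [hr])))
    rw [sat_dia] at this
    obtain ⟨u', hu', hs⟩ := this
    exact ⟨u', hu', hspec u' v hs⟩
  · intro w
    induction F.rooted w with
    | refl => exact ⟨G.root, hspec G.root F.root hra⟩
    | tail hab hbc ih =>
        obtain ⟨u, hu⟩ := ih
        rename_i b c
        have : F.R (h u) c := hu ▸ hbc
        obtain ⟨_, _, h3, _⟩ := hbody u (h u) (hhu u)
        have hd := (sat_bigAnd _ _ _ _).1 h3 (MForm.dia (.atom (ν c)))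
          (List.mem_map_of_mem (Finset.mem_toList.2 (by simp [this])))
        rw [sat_dia] at hd
        obtain ⟨u', hu', hs⟩ := hd
        exact ⟨u', hspec u' c hs⟩

lemma pmorph_sat (F G : FFrame) (h : G.W → F.W)
    (hforth : ∀ u u', G.R u u' → F.R (h u) (h u'))
    (hlift : ∀ u v, F.R (h u) v → ∃ u', G.R u u' ∧ h u' = v)
    (V : F.W → ℕ → Prop) (θ : MForm ℕ) :
    ∀ u, sat G (fun u p => V (h u) p) u θ ↔ sat F V (h u) θ := by
  induction θ with
  | top => intro u; simp [sat]
  | atom p => intro u; simp [sat]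
  | neg φ ih => intro u; simp only [sat]; rw [ih u]
  | and φ ψ ih1 ih2 => intro u; simp only [sat]; rw [ih1 u, ih2 u]
  | box φ ih =>
      intro u
      simp only [sat]
      constructor
      · intro hh v hv
        obtain ⟨u', hu', rfl⟩ := hlift u v hv
        exact (ih u').1 (hh u' hu')
      · intro hh u' hu'
        exact (ih u').2 (hh (h u') (hforth u u' hu'))

lemma pmorph_log (F G : FFrame) (h : G.W → F.W) (hroot : h G.root = F.root)
    (hforth : ∀ u u', G.R u u' → F.R (h u) (h u'))
    (hlift : ∀ u v, F.R (h u) v → ∃ u', G.R u u' ∧ h u' = v) :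
    Log1 G ⊆ Log1 F := by
  intro θ hθ V
  have := (pmorph_sat F G h hforth hlift V θ G.root).1 (hθ (fun u p => V (h u) p))
  rwa [hroot] at this

end Aux7
section Aux8
open MForm

lemma iso_of_cip {ι : Type} [Fintype ι] (Fr : ι → FFrame)
    (hred : ∀ i j : ι, i ≠ j → ¬ (Log1 (Fr i) ⊆ Log1 (Fr j)))
    (hC : HasCIP (Log Fr)) :
    ∀ (σ : Finset ℕ) (i j : ι) (V₁ : (Fr i).W → ℕ → Prop) (V₂ : (Fr j).W → ℕ → Prop),
        Bisim σ (Fr i) V₁ (Fr i).root (Fr j) V₂ (Fr j).root →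
        i = j ∧
        ∃ g : (Fr i).W ≃ (Fr j).W,
          g (Fr i).root = (Fr j).root ∧
          (∀ a b : (Fr i).W, (Fr i).R a b ↔ (Fr j).R (g a) (g b)) ∧
          (∀ w : (Fr i).W, ∀ p ∈ σ, (V₁ w p ↔ V₂ (g w) p)) := by
  classical
  intro σ i j V₁ V₂ hb
  by_contra hcon
  -- fresh names
  set b : ℕ := σ.sup id + 1 with hbdef
  have hσlt : ∀ p ∈ σ, p < b := by
    intro p hp
    have : id p ≤ σ.sup id := Finset.le_sup hp
    simp only [id] at this
    omega
  set k₁ : ℕ := Fintype.card (Fr i).W with hk₁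
  set e₁ := Fintype.equivFin (Fr i).W with he₁
  set e₂ := Fintype.equivFin (Fr j).W with he₂
  set ν₁ : (Fr i).W → ℕ := fun w => b + (e₁ w : ℕ) with hν₁
  set ν₂ : (Fr j).W → ℕ := fun v => b + k₁ + (e₂ v : ℕ) with hν₂
  have hinj₁ : Function.Injective ν₁ := by
    intro a a' h
    simp only [hν₁] at h
    exact e₁.injective (Fin.ext (by omega))
  have hinj₂ : Function.Injective ν₂ := by
    intro a a' h
    simp only [hν₂] at h
    exact e₂.injective (Fin.ext (by omega))
  have hfresh₁ : ∀ w, ν₁ w ∉ σ := by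
    intro w hc
    have := hσlt _ hc
    simp only [hν₁] at this
    omega
  have hfresh₂ : ∀ v, ν₂ v ∉ σ := by
    intro v hc
    have := hσlt _ hc
    simp only [hν₂] at this
    omega
  have hdisj : ∀ w v, ν₁ w ≠ ν₂ v := by
    intro w v hc
    have h1 : (e₁ w : ℕ) < k₁ := (e₁ w).isLt
    simp only [hν₁, hν₂] at hc
    omega
  set d : ℕ := ∑ k : ι, Fintype.card (Fr k).W with hd
  have hdge : ∀ k : ι, Fintype.card (Fr k).W ≤ d :=
    fun k => Finset.single_le_sum (f := fun k => Fintype.card (Fr k).W)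
      (fun _ _ => Nat.zero_le _) (Finset.mem_univ k)
  set φd : MForm ℕ := desc σ (Fr i) V₁ ν₁ d with hφd
  set ψd : MForm ℕ := .neg (desc σ (Fr j) V₂ ν₂ d) with hψd
  -- the implication is in the logic
  have himpL : φd.imp ψd ∈ Log Fr := by
    intro k U
    rw [sat_imp]
    intro hsat1
    show ¬ sat (Fr k) U (Fr k).root (desc σ (Fr j) V₂ ν₂ d)
    intro hsat2
    have hdk : ∀ u : (Fr k).W, ∃ m ≤ d, stepR (Fr k) m (Fr k).root u := by
      intro u
      obtain ⟨m, hm, hs⟩ := reach_bound (Fr k) u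
      exact ⟨m, le_trans hm (hdge k), hs⟩
    obtain ⟨h₁, hr₁, hat₁, hforth₁, hlift₁, hsurj₁⟩ :=
      desc_extract σ (Fr i) V₁ ν₁ hinj₁ d (Fr k) U hdk hsat1
    obtain ⟨h₂, hr₂, hat₂, hforth₂, hlift₂, hsurj₂⟩ :=
      desc_extract σ (Fr j) V₂ ν₂ hinj₂ d (Fr k) U hdk hsat2
    have hki : k = i := by
      by_contra hne
      exact hred k i hne (pmorph_log (Fr i) (Fr k) h₁ hr₁ hforth₁ hlift₁)
    have hkj : k = j := by
      by_contra hne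
      exact hred k j hne (pmorph_log (Fr j) (Fr k) h₂ hr₂ hforth₂ hlift₂)
    subst hki
    subst hkj
    have hbij₁ : Function.Bijective h₁ := hsurj₁.bijective_of_finite
    have hbij₂ : Function.Bijective h₂ := hsurj₂.bijective_of_finite
    set g₁ := Equiv.ofBijective h₁ hbij₁ with hg₁
    set g₂ := Equiv.ofBijective h₂ hbij₂ with hg₂
    have hiff₁ : ∀ u u', (Fr k).R u u' ↔ (Fr k).R (h₁ u) (h₁ u') := by
      intro u u'
      constructor
      · exact hforth₁ u u'
      · intro hr
        obtain ⟨u'', hu'', heq⟩ := hlift₁ u (h₁ u') hr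
        rwa [hbij₁.injective heq] at hu''
    have hiff₂ : ∀ u u', (Fr k).R u u' ↔ (Fr k).R (h₂ u) (h₂ u') := by
      intro u u'
      constructor
      · exact hforth₂ u u'
      · intro hr
        obtain ⟨u'', hu'', heq⟩ := hlift₂ u (h₂ u') hr
        rwa [hbij₂.injective heq] at hu''
    set g : (Fr k).W ≃ (Fr k).W := g₁.symm.trans g₂ with hg
    have hsymm₁ : ∀ a, h₁ (g₁.symm a) = a := fun a => g₁.apply_symm_apply a
    refine hcon ⟨rfl, g, ?_, ?_, ?_⟩
    · show g₂ (g₁.symm (Fr k).root) = (Fr k).root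
      have : g₁.symm (Fr k).root = (Fr k).root := by
        rw [Equiv.symm_apply_eq]
        exact hr₁.symm
      rw [this]
      exact hr₂
    · intro a a'
      show (Fr k).R a a' ↔ (Fr k).R (h₂ (g₁.symm a)) (h₂ (g₁.symm a'))
      rw [← hiff₂]
      conv_lhs => rw [← hsymm₁ a, ← hsymm₁ a']
      exact (hiff₁ _ _).symm
    · intro a p hp
      show V₁ a p ↔ V₂ (h₂ (g₁.symm a)) p
      rw [← hat₂ (g₁.symm a) p hp, hat₁ (g₁.symm a) p hp, hsymm₁ a]
  -- get an interpolant and derive a contradiction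
  obtain ⟨χ, hφχ, hχψ, hsigχ⟩ := hC φd ψd himpL
  have hχσ : χ.sig ⊆ σ := by
    intro p hp
    have h12 := hsigχ hp
    rw [Finset.mem_inter] at h12
    have h1 : p ∈ σ ∪ Finset.univ.image ν₁ := desc_sig σ (Fr i) V₁ ν₁ d h12.1
    have h2 : p ∈ σ ∪ Finset.univ.image ν₂ := by
      have : (ψd).sig = (desc σ (Fr j) V₂ ν₂ d).sig := rfl
      exact desc_sig σ (Fr j) V₂ ν₂ d (this ▸ h12.2)
    rw [Finset.mem_union] at h1 h2
    rcases h1 with h1 | h1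
    · exact h1
    rcases h2 with h2 | h2
    · exact h2
    obtain ⟨w, _, rfl⟩ := Finset.mem_image.1 h1
    obtain ⟨v, _, hv⟩ := Finset.mem_image.1 h2
    exact absurd hv.symm (hdisj w v)
  have hself₁ := desc_selfsat σ (Fr i) V₁ ν₁ hinj₁ hfresh₁ d
  have hχ1 : sat (Fr i) (canonV σ (Fr i) V₁ ν₁) (Fr i).root χ := by
    have := hφχ i (canonV σ (Fr i) V₁ ν₁)
    rw [sat_imp] at this
    exact this hself₁
  have hχV₁ : sat (Fr i) V₁ (Fr i).root χ := by
    apply (sat_agree (Fr i) (canonV σ (Fr i) V₁ ν₁) V₁ χ ?_ _).1 hχ1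
    intro w p hp
    exact canonV_atom σ (Fr i) V₁ ν₁ hfresh₁ w p (hχσ hp)
  have hχV₂ : sat (Fr j) V₂ (Fr j).root χ := by
    obtain ⟨Z, hZ, hZr⟩ := hb
    exact (bisim_invariant σ hZ χ hχσ _ _ hZr).1 hχV₁
  have hχU₂ : sat (Fr j) (canonV σ (Fr j) V₂ ν₂) (Fr j).root χ := by
    apply (sat_agree (Fr j) (canonV σ (Fr j) V₂ ν₂) V₂ χ ?_ _).2 hχV₂
    intro w p hp
    exact canonV_atom σ (Fr j) V₂ ν₂ hfresh₂ w p (hχσ hp)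
  have hψsat : sat (Fr j) (canonV σ (Fr j) V₂ ν₂) (Fr j).root ψd := by
    have := hχψ j (canonV σ (Fr j) V₂ ν₂)
    rw [sat_imp] at this
    exact this hχU₂
  exact hψsat (desc_selfsat σ (Fr j) V₂ ν₂ hinj₂ hfresh₂ d)

end Aux8

/-- for a tabular quasi-normal logic `L = Log Fr` given by a reduced finite
family of finite rooted frames, `L` has CIP iff for every signature `σ`, any two models
based on frames of the family whose roots are σ-bisimilar have isomorphic σ-reducts
(in particular they are based on the same frame). -/
theorem stmt12 {ι : Type} [Fintype ι] (Fr : ι → FFrame)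
    (hred : ∀ i j : ι, i ≠ j → ¬ (Log1 (Fr i) ⊆ Log1 (Fr j))) :
    HasCIP (Log Fr) ↔
      ∀ (σ : Finset ℕ) (i j : ι) (V₁ : (Fr i).W → ℕ → Prop) (V₂ : (Fr j).W → ℕ → Prop),
        Bisim σ (Fr i) V₁ (Fr i).root (Fr j) V₂ (Fr j).root →
        i = j ∧
        ∃ g : (Fr i).W ≃ (Fr j).W,
          g (Fr i).root = (Fr j).root ∧
          (∀ a b : (Fr i).W, (Fr i).R a b ↔ (Fr j).R (g a) (g b)) ∧
          (∀ w : (Fr i).W, ∀ p ∈ σ, (V₁ w p ↔ V₂ (g w) p)) := by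
  constructor
  · exact iso_of_cip Fr hred
  · exact cip_of_iso Fr
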